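/- (Dual certificate / weak duality for the switch-simulation SDP.) Fix k ≥ 1 and a word w ∈ {A,B}^k. Let {J^A_i}_{i∈I} and {J^B_j}_{j∈J'} be finite families of qubit-channel Choi operators, let {R_{ij}} be Hermitian 2×2 matrices with Σ_{i,j} Tr[R_{ij} · R(J^A_i, J^B_j)] = 1, and let Γ be a positive semidefinite matrix on the k-slot comb space (qubit factors I_1,O_1,…,I_k,O_k,F) such that (i) Tr(C·Γ) = Tr(Γ)/2^{k+1} for every k-slot quantum comb C (restricted scenario), and (ii) Γ − Σ_{i,j} (J_{w_1}^{(ij)} ⊗ ⋯ ⊗ J_{w_k}^{(ij)})^T ⊗ R_{ij} is positive semidefinite, where J_{w_m}^{(ij)} := J^A_i if w_m = A and J^B_j if w_m = B, the m-th factor acting on I_m⊗O_m and R_{ij} acting on F. Then every p ∈ ℝ for which there exist a k-slot quantum comb C and a matrix C_s with C_s and C − C_s positive semidefinite and C_s * (J_{w_1}^{(ij)} ⊗ ⋯ ⊗ J_{w_k}^{(ij)}) = p · R(J^A_i, J^B_j) for all i ∈ I, j ∈ J', satisfies p ≤ Tr(Γ)/2^{k+1}. -/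

import Mathlib

open scoped BigOperators ComplexOrder

noncomputable section

/-- The index space of one comb slot / one channel: input qubit × output qubit. -/
abbrev Duo : Type := Fin 2 × Fin 2

/-- Partial trace over the (second) output factor of a matrix on ℂ²⊗ℂ². -/
def ptraceO (M : Matrix Duo Duo ℂ) : Matrix (Fin 2) (Fin 2) ℂ :=
  Matrix.of fun i i' => ∑ o : Fin 2, M (i, o) (i', o)

/-- A qubit-channel Choi operator: positive semidefinite, with output partial trace 1₂. -/
def IsChoi (J : Matrix Duo Duo ℂ) : Prop :=
  J.PosSemidef ∧ ptraceO J = 1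

/-- Amplitudes of the vector |s₊₀⟩ on the qubit systems A_I, A_O, B_I, B_O, t_O, c_O:
|s₊₀⟩ = (1/√2)(|0⟩^{A_I}|𝟙⟩^{A_O B_I}|𝟙⟩^{B_O t_O}|0⟩^{c_O}
            + |1⟩^{B_I}|𝟙⟩^{B_O A_I}|𝟙⟩^{A_O t_O}|1⟩^{c_O}). -/
def sVec (aI aO bI bO t c : Fin 2) : ℂ :=
  (Real.sqrt 2 : ℂ)⁻¹ *
    ((if aI = 0 ∧ aO = bI ∧ bO = t ∧ c = 0 then 1 else 0) +
     (if bI = 1 ∧ bO = aI ∧ aO = t ∧ c = 1 then 1 else 0))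

/-- R(J_A,J_B) := Tr_{t_O}(S₊₀) * (J_A ⊗ J_B), with S₊₀ = |s₊₀⟩⟨s₊₀|: the 2×2 output
control state of the quantum switch on channels J_A, J_B with control |+⟩, target |0⟩,
and target output discarded (the link product contracts A_I,A_O,B_I,B_O). -/
def Rswitch (JA JB : Matrix Duo Duo ℂ) : Matrix (Fin 2) (Fin 2) ℂ :=
  Matrix.of fun c c' =>
    ∑ aI : Fin 2, ∑ aO : Fin 2, ∑ bI : Fin 2, ∑ bO : Fin 2,
    ∑ aI' : Fin 2, ∑ aO' : Fin 2, ∑ bI' : Fin 2, ∑ bO' : Fin 2, ∑ t : Fin 2,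
      JA (aI, aO) (aI', aO') * JB (bI, bO) (bI', bO') *
        (sVec aI aO bI bO t c * star (sVec aI' aO' bI' bO' t c'))

/-- Index space of a k-slot comb in the restricted scenario:
slots I₁O₁,…,I_kO_k together with the final (output control) qubit F. -/
abbrev CombIx (k : ℕ) : Type := (Fin k → Duo) × Fin 2

/-- A k-slot quantum comb (restricted scenario): C ≥ 0 and there are reduced combs C^{(m)}
with Tr_F C = C^{(k)}, Tr_{O_m} C^{(m)} = C^{(m-1)} ⊗ 1_{I_m} (2 ≤ m ≤ k),
and Tr_{O_1} C^{(1)} = 1_{I_1}. -/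
def IsComb (k : ℕ) (C : Matrix (CombIx k) (CombIx k) ℂ) : Prop :=
  C.PosSemidef ∧
  ∃ Cm : (m : ℕ) → Matrix (Fin m → Duo) (Fin m → Duo) ℂ,
    (∀ s s' : Fin k → Duo, ∑ f : Fin 2, C (s, f) (s', f) = Cm k s s') ∧
    (∀ n : ℕ, n + 2 ≤ k → ∀ (s s' : Fin (n + 1) → Duo) (i i' : Fin 2),
      ∑ o : Fin 2, Cm (n + 2) (Fin.snoc s (i, o)) (Fin.snoc s' (i', o)) =
        Cm (n + 1) s s' * (if i = i' then 1 else 0)) ∧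
    (∀ i i' : Fin 2, ∑ o : Fin 2, Cm 1 (fun _ => (i, o)) (fun _ => (i', o)) =
      if i = i' then 1 else 0)

/-- The link product C * (J₁ ⊗ ⋯ ⊗ J_k): the m-th tensor factor acts on the slot I_m⊗O_m,
the contraction is over all slots, and the result is a 2×2 matrix on F = c_O. -/
def combLink {k : ℕ} (C : Matrix (CombIx k) (CombIx k) ℂ)
    (Js : Fin k → Matrix Duo Duo ℂ) : Matrix (Fin 2) (Fin 2) ℂ :=
  Matrix.of fun c c' => ∑ s : Fin k → Duo, ∑ s' : Fin k → Duo,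
    (∏ m, Js m (s m) (s' m)) * C (s, c) (s', c')

/-- The letters of an order word. -/
inductive Letter : Type
  | A : Letter
  | B : Letter
deriving DecidableEq

/-- Pick the channel corresponding to a letter. -/
def Letter.pick {α : Type*} : Letter → α → α → α
  | Letter.A, a, _ => a
  | Letter.B, _, b => b


lemma psd_trace_nonneg {n : Type*} [Fintype n] {M : Matrix n n ℂ}
    (hM : M.PosSemidef) : 0 ≤ M.trace := by
  classical
  unfold Matrix.trace
  refine Finset.sum_nonneg fun i _ => ?_
  exact hM.diag_nonneg

lemma trace_mul_psd_nonneg {n : Type*} [Fintype n] [DecidableEq n] {A B : Matrix n n ℂ}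
    (hA : A.PosSemidef) (hB : B.PosSemidef) : 0 ≤ (A * B).trace := by
  open scoped MatrixOrder in
  obtain ⟨S, rfl⟩ := CStarAlgebra.nonneg_iff_eq_star_mul_self.mp hB.nonneg
  rw [← mul_assoc, Matrix.trace_mul_comm, ← mul_assoc, Matrix.star_eq_conjTranspose]
  exact psd_trace_nonneg (hA.mul_mul_conjTranspose_same S)

lemma trace_key {k : ℕ} (Cs : Matrix (CombIx k) (CombIx k) ℂ)
    (Jm : Fin k → Matrix Duo Duo ℂ) (Rm : Matrix (Fin 2) (Fin 2) ℂ) :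
    (Cs * Matrix.of (fun sf sf' : CombIx k =>
        (∏ m, Jm m (sf'.1 m) (sf.1 m)) * Rm sf.2 sf'.2)).trace
      = (Rm * combLink Cs Jm).trace := by
  simp only [Matrix.trace, Matrix.diag, Matrix.mul_apply, Matrix.of_apply, combLink,
    Finset.mul_sum, Fintype.sum_prod_type]
  have hL : ∑ q : (Fin k → Duo) × Fin 2 × (Fin k → Duo) × Fin 2,
      Cs (q.1, q.2.1) (q.2.2.1, q.2.2.2) *
        ((∏ m, Jm m (q.1 m) (q.2.2.1 m)) * Rm q.2.2.2 q.2.1)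
      = ∑ s : Fin k → Duo, ∑ f : Fin 2, ∑ s' : Fin k → Duo, ∑ f' : Fin 2,
        Cs (s, f) (s', f') * ((∏ m, Jm m (s m) (s' m)) * Rm f' f) := by
    simp only [Fintype.sum_prod_type]
  have hR : ∑ q : Fin 2 × Fin 2 × (Fin k → Duo) × (Fin k → Duo),
      Rm q.1 q.2.1 * ((∏ m, Jm m (q.2.2.1 m) (q.2.2.2 m)) * Cs (q.2.2.1, q.2.1) (q.2.2.2, q.1))
      = ∑ c : Fin 2, ∑ c' : Fin 2, ∑ s : Fin k → Duo, ∑ s' : Fin k → Duo,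
        Rm c c' * ((∏ m, Jm m (s m) (s' m)) * Cs (s, c') (s', c)) := by
    simp only [Fintype.sum_prod_type]
  rw [← hL, ← hR]
  exact Fintype.sum_equiv
    ⟨fun q => (q.2.2.2, q.2.1, q.1, q.2.2.1), fun p => (p.2.2.1, p.2.1, p.2.2.2, p.1),
      fun _ => rfl, fun _ => rfl⟩ _ _ (fun q => by simp only [Equiv.coe_fn_mk]; ring)

/-- Dual certificate / weak duality for the switch-simulation SDP: any dual feasible point
(R_{ij}, Γ) upper-bounds the success probability of every probabilistic restricted
simulation on the given families of input channels by Tr(Γ)/2^{k+1}. -/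
theorem switch_dual_certificate (k : ℕ) (hk : 1 ≤ k) (w : Fin k → Letter)
    {I J' : Type} [Fintype I] [Fintype J']
    (JA : I → Matrix Duo Duo ℂ) (JB : J' → Matrix Duo Duo ℂ)
    (hJA : ∀ i, IsChoi (JA i)) (hJB : ∀ j, IsChoi (JB j))
    (R : I → J' → Matrix (Fin 2) (Fin 2) ℂ)
    (hRherm : ∀ i j, (R i j).IsHermitian)
    (hRnorm : ∑ i : I, ∑ j : J', (R i j * Rswitch (JA i) (JB j)).trace = 1)
    (Γ : Matrix (CombIx k) (CombIx k) ℂ)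
    (hΓpsd : Γ.PosSemidef)
    (hΓdual : ∀ C : Matrix (CombIx k) (CombIx k) ℂ, IsComb k C →
      (C * Γ).trace = Γ.trace / (2 : ℂ) ^ (k + 1))
    (hΓdom : (Γ - Matrix.of fun (sf sf' : CombIx k) =>
        ∑ i : I, ∑ j : J',
          (∏ m, ((w m).pick (JA i) (JB j)) (sf'.1 m) (sf.1 m)) * R i j sf.2 sf'.2).PosSemidef)
    (p : ℝ)
    (hp : ∃ C Cs : Matrix (CombIx k) (CombIx k) ℂ,
      IsComb k C ∧ Cs.PosSemidef ∧ (C - Cs).PosSemidef ∧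
      ∀ (i : I) (j : J'),
        combLink Cs (fun m => (w m).pick (JA i) (JB j))
          = (p : ℂ) • Rswitch (JA i) (JB j)) :
    p ≤ Γ.trace.re / 2 ^ (k + 1) := by
  classical
  obtain ⟨C, Cs, hC, hCs, hCmCs, hlink⟩ := hp
  set D : Matrix (CombIx k) (CombIx k) ℂ := Matrix.of fun sf sf' =>
    ∑ i : I, ∑ j : J',
      (∏ m, ((w m).pick (JA i) (JB j)) (sf'.1 m) (sf.1 m)) * R i j sf.2 sf'.2 with hD
  have hDsum : D = ∑ i : I, ∑ j : J', Matrix.of (fun sf sf' : CombIx k =>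
      (∏ m, ((w m).pick (JA i) (JB j)) (sf'.1 m) (sf.1 m)) * R i j sf.2 sf'.2) := by
    ext sf sf'
    simp [hD, Matrix.sum_apply]
  have key : (Cs * D).trace = (p : ℂ) := by
    rw [hDsum]
    simp only [Matrix.mul_sum, Matrix.trace_sum]
    calc ∑ i : I, ∑ j : J', (Cs * Matrix.of (fun sf sf' : CombIx k =>
          (∏ m, ((w m).pick (JA i) (JB j)) (sf'.1 m) (sf.1 m)) * R i j sf.2 sf'.2)).trace
        = ∑ i : I, ∑ j : J',
            (R i j * combLink Cs (fun m => (w m).pick (JA i) (JB j))).trace := by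
          exact Finset.sum_congr rfl fun i _ => Finset.sum_congr rfl fun j _ =>
            trace_key Cs _ (R i j)
      _ = ∑ i : I, ∑ j : J', (R i j * ((p : ℂ) • Rswitch (JA i) (JB j))).trace := by
          simp only [hlink]
      _ = (p : ℂ) * ∑ i : I, ∑ j : J', (R i j * Rswitch (JA i) (JB j)).trace := by
          simp only [Matrix.mul_smul, Matrix.trace_smul, smul_eq_mul, Finset.mul_sum]
      _ = (p : ℂ) := by rw [hRnorm, mul_one]
  have h1 : (Cs * D).trace ≤ (Cs * Γ).trace := by
    have h := trace_mul_psd_nonneg hCs hΓdom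
    rw [Matrix.mul_sub, Matrix.trace_sub] at h
    exact sub_nonneg.mp h
  have h2 : (Cs * Γ).trace ≤ (C * Γ).trace := by
    have h := trace_mul_psd_nonneg hCmCs hΓpsd
    rw [Matrix.sub_mul, Matrix.trace_sub] at h
    exact sub_nonneg.mp h
  have hfin : (p : ℂ) ≤ Γ.trace / (2 : ℂ) ^ (k + 1) := by
    rw [← key, ← hΓdual C hC]
    exact h1.trans h2
  have hre := (Complex.le_def.mp hfin).1
  have h2c : ((2 : ℂ)) ^ (k + 1) = (((2 : ℝ) ^ (k + 1) : ℝ) : ℂ) := by push_cast; ring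
  rw [h2c, Complex.div_ofReal_re] at hre
  simpa using hre
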